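/- arXiv:2012.01005 — 4 statements merged into one kernel-verified Lean document; each statement's English description precedes it below -/
import Mathlib

section
/- Let c, L, E, I > 0 and a > 0 with a ≠ 16 be reals, let z ∈ ℝ, and let P ≥ 1 be an integer. Then Σ_{i=1}^P (a^{i−1}/(E·I)) ∫_0^{L·2^{1−i}} (Q_i(z) − c·x) · c·2^{−i}·(L·2^{1−i} − x) dx = (20·c²·L³/(3·E·I·a)) · (1 − (a/16)^P)/((16/a) − 1) − (c²·L³/(E·I)) · Σ_{i=1}^P (a/16)^{i−1} σ(2^{i−1} z), where Q_i(z) = 4·c·L·(2^{−i} − σ(2^{i−1} z)/2^{i−1}). -/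
open Filter

/-- Distance from a real number to the nearest integer: σ(x) = min_{k∈ℤ} |x − k|. -/
noncomputable def distNearInt (x : ℝ) : ℝ := ⨅ k : ℤ, |x - k|

lemma integ_aux (A k c ℓ : ℝ) :
    ∫ x in (0:ℝ)..ℓ, (A - c*x)*(k*(ℓ - x)) = k*A*ℓ^2/2 - k*c*ℓ^3/6 := by
  have h : ∀ x : ℝ, (A - c*x)*(k*(ℓ - x)) = k*A*ℓ + (-(k*A) - k*c*ℓ)*x + (k*c)*x^2 := by
    intro x; ring
  have c1 : Continuous fun _ : ℝ => k*A*ℓ := continuous_const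
  have c2 : Continuous fun x : ℝ => (-(k*A) - k*c*ℓ)*x := continuous_const.mul continuous_id
  have c3 : Continuous fun x : ℝ => (k*c)*x^2 := continuous_const.mul (continuous_pow 2)
  simp_rw [h]
  rw [intervalIntegral.integral_add ((show Continuous fun x : ℝ => k*A*ℓ + (-(k*A) - k*c*ℓ)*x from c1.add c2).intervalIntegrable _ _)
      (c3.intervalIntegrable _ _),
    intervalIntegral.integral_add (c1.intervalIntegrable _ _) (c2.intervalIntegrable _ _),
    intervalIntegral.integral_const, intervalIntegral.integral_const_mul,
    intervalIntegral.integral_const_mul, integral_id, integral_pow]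
  push_cast [smul_eq_mul]
  ring

/-- Bending-moment term of the PVW for vertical displacements of an end node at `z`
in a binary tree structure with `P` levels, for `a ≠ 16`. -/
theorem vertical_bending_term (c L E I a : ℝ) (hc : 0 < c) (hL : 0 < L) (hE : 0 < E)
    (hI : 0 < I) (ha : 0 < a) (ha16 : a ≠ 16) (z : ℝ) (P : ℕ) (hP : 1 ≤ P) :
    ∑ i ∈ Finset.Icc 1 P, (a ^ (i - 1) / (E * I)) *
      ∫ x in (0:ℝ)..(L * 2 ^ ((1:ℤ) - (i:ℤ))),
        (4 * c * L * (2 ^ (-(i:ℤ)) - distNearInt (2 ^ (i - 1) * z) / 2 ^ (i - 1)) - c * x) *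
          (c * 2 ^ (-(i:ℤ)) * (L * 2 ^ ((1:ℤ) - (i:ℤ)) - x)) =
    (20 * c ^ 2 * L ^ 3 / (3 * E * I * a)) * ((1 - (a / 16) ^ P) / (16 / a - 1)) -
      (c ^ 2 * L ^ 3 / (E * I)) *
        ∑ i ∈ Finset.Icc 1 P, (a / 16) ^ (i - 1) * distNearInt (2 ^ (i - 1) * z) := by
  have hE' := hE.ne'
  have hI' := hI.ne'
  have ha' := ha.ne'
  have key : ∀ i ∈ Finset.Icc 1 P,
      (a ^ (i - 1) / (E * I)) *
        ∫ x in (0:ℝ)..(L * 2 ^ ((1:ℤ) - (i:ℤ))),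
          (4 * c * L * (2 ^ (-(i:ℤ)) - distNearInt (2 ^ (i - 1) * z) / 2 ^ (i - 1)) - c * x) *
            (c * 2 ^ (-(i:ℤ)) * (L * 2 ^ ((1:ℤ) - (i:ℤ)) - x)) =
      20 * c ^ 2 * L ^ 3 / (48 * E * I) * (a / 16) ^ (i - 1)
        - c ^ 2 * L ^ 3 / (E * I) * ((a / 16) ^ (i - 1) * distNearInt (2 ^ (i - 1) * z)) := by
    intro i hi
    rw [Finset.mem_Icc] at hi
    obtain ⟨j, rfl⟩ : ∃ j, i = j + 1 := ⟨i - 1, by omega⟩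
    rw [integ_aux]
    simp only [Nat.add_sub_cancel]
    have h2' : ((2:ℝ)) ^ (-(((j:ℕ)+1 : ℕ):ℤ)) = ((2:ℝ)^(j+1))⁻¹ := by
      rw [zpow_neg]
      norm_cast
    have h3 : ((2:ℝ)) ^ ((1:ℤ) - (((j:ℕ)+1 : ℕ):ℤ)) = ((2:ℝ)^j)⁻¹ := by
      have h : (1:ℤ) - (((j:ℕ)+1 : ℕ):ℤ) = -(j:ℤ) := by push_cast; ring
      rw [h, zpow_neg, zpow_natCast]
    rw [h2', h3]
    have hq : ((2:ℝ)^j) ≠ 0 := by positivity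
    have h16 : (16:ℝ) ^ j = ((2:ℝ)^j)^4 := by
      rw [show (16:ℝ) = 2^4 by norm_num, ← pow_mul, ← pow_mul, Nat.mul_comm]
    rw [div_pow, h16, pow_succ]
    field_simp
    ring
  rw [Finset.sum_congr rfl key, Finset.sum_sub_distrib, ← Finset.mul_sum, ← Finset.mul_sum]
  have hr : (a/16 : ℝ) ≠ 1 := by
    intro h
    apply ha16
    field_simp at h
    linarith
  have hgeom : ∑ i ∈ Finset.Icc 1 P, (a/16:ℝ)^(i-1) = ((a/16)^P - 1)/((a/16) - 1) := by
    rw [← Finset.Ico_add_one_right_eq_Icc, Finset.sum_Ico_eq_sum_range]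
    simp only [Nat.succ_sub_one, Nat.add_sub_cancel_left]
    exact geom_sum_eq hr P
  rw [hgeom, show (a/16 - 1 : ℝ) = (a-16)/16 from by ring,
    show (16/a - 1 : ℝ) = (16-a)/a from by field_simp]
  have hs1 : (a - 16 : ℝ) ≠ 0 := sub_ne_zero.2 ha16
  have hs2 : (16 - a : ℝ) ≠ 0 := sub_ne_zero.2 (Ne.symm ha16)
  field_simp
  ring
end

section
/- Let c, L, E, I > 0 be reals, let z ∈ ℝ, and let P ≥ 1 be an integer. Then for a = 16, Σ_{i=1}^P (16^{i−1}/(E·I)) ∫_0^{L·2^{1−i}} (Q_i(z) − c·x) · c·2^{−i}·(L·2^{1−i} − x) dx = 5·c²·L³·P/(12·E·I) − (c²·L³/(E·I)) · Σ_{i=1}^P σ(2^{i−1} z), where Q_i(z) = 4·c·L·(2^{−i} − σ(2^{i−1} z)/2^{i−1}). -/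
lemma my_integral (A B C ℓ : ℝ) :
    ∫ x in (0:ℝ)..ℓ, (A - C * x) * (B * (ℓ - x)) =
      B * A * ℓ ^ 2 / 2 - B * C * ℓ ^ 3 / 6 := by
  have h : ∀ x : ℝ, (A - C*x)*(B*(ℓ-x)) = B*A*ℓ - (B*A + B*C*ℓ)*x + (B*C)*x^2 :=
    fun x => by ring
  simp_rw [h]
  rw [intervalIntegral.integral_add, intervalIntegral.integral_sub,
    intervalIntegral.integral_const, intervalIntegral.integral_const_mul,
    intervalIntegral.integral_const_mul, integral_id, integral_pow]
  · simp only [smul_eq_mul]; push_cast; ring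
  all_goals exact Continuous.intervalIntegrable (by fun_prop) _ _

/-- Bending-moment term of the PVW for vertical displacements of an end node at `z`
in a binary tree structure with `P` levels, in the critical case `a = 16`. -/
theorem vertical_bending_term_critical (c L E I : ℝ) (hc : 0 < c) (hL : 0 < L) (hE : 0 < E)
    (hI : 0 < I) (z : ℝ) (P : ℕ) (hP : 1 ≤ P) :
    ∑ i ∈ Finset.Icc 1 P, ((16:ℝ) ^ (i - 1) / (E * I)) *
      ∫ x in (0:ℝ)..(L * 2 ^ ((1:ℤ) - (i:ℤ))),
        (4 * c * L * (2 ^ (-(i:ℤ)) - distNearInt (2 ^ (i - 1) * z) / 2 ^ (i - 1)) - c * x) *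
          (c * 2 ^ (-(i:ℤ)) * (L * 2 ^ ((1:ℤ) - (i:ℤ)) - x)) =
    5 * c ^ 2 * L ^ 3 * P / (12 * E * I) -
      (c ^ 2 * L ^ 3 / (E * I)) *
        ∑ i ∈ Finset.Icc 1 P, distNearInt (2 ^ (i - 1) * z) := by
  have hE' := hE.ne'
  have hI' := hI.ne'
  have key : ∀ i ∈ Finset.Icc 1 P,
      ((16:ℝ) ^ (i - 1) / (E * I)) *
      ∫ x in (0:ℝ)..(L * 2 ^ ((1:ℤ) - (i:ℤ))),
        (4 * c * L * (2 ^ (-(i:ℤ)) - distNearInt (2 ^ (i - 1) * z) / 2 ^ (i - 1)) - c * x) *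
          (c * 2 ^ (-(i:ℤ)) * (L * 2 ^ ((1:ℤ) - (i:ℤ)) - x)) =
      5 * c ^ 2 * L ^ 3 / (12 * E * I) -
        (c ^ 2 * L ^ 3 / (E * I)) * distNearInt (2 ^ (i - 1) * z) := by
    intro i hi
    have hi1 : 1 ≤ i := (Finset.mem_Icc.mp hi).1
    set s := distNearInt (2 ^ (i - 1) * z) with hs
    set u := (2:ℝ) ^ i with hu
    have hu0 : (0:ℝ) < u := pow_pos (by norm_num) _
    have h1 : (2:ℝ) ^ (-(i:ℤ)) = u⁻¹ := by rw [zpow_neg, zpow_natCast]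
    have h2 : (2:ℝ) ^ ((1:ℤ) - (i:ℤ)) = 2 * u⁻¹ := by
      rw [zpow_sub₀ (by norm_num : (2:ℝ) ≠ 0), zpow_one, zpow_natCast, div_eq_mul_inv]
    have h3 : (2:ℝ) ^ (i - 1) = u / 2 := by
      rw [pow_sub₀ (2:ℝ) (by norm_num) hi1, pow_one]; rw [← hu]; ring
    have h4 : (16:ℝ) ^ (i - 1) = u ^ 4 / 16 := by
      rw [show (16:ℝ) = 2 ^ (4:ℕ) by norm_num, ← pow_mul,
        show 4 * (i - 1) = i * 4 - 4 by omega,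
        pow_sub₀ (2:ℝ) (by norm_num) (by omega : 4 ≤ i * 4), pow_mul]
      rw [← hu]; ring
    rw [my_integral, h1, h2, h3, h4]
    have hu' := hu0.ne'
    field_simp
    ring
  rw [Finset.sum_congr rfl key, Finset.sum_sub_distrib, Finset.sum_const,
    Nat.card_Icc, ← Finset.mul_sum]
  simp only [nsmul_eq_mul]
  push_cast [Nat.add_sub_cancel]
  ring
end

section
/- Let c, s, L, E, I, A, A*, G > 0 and a, u, v > 0 with a ≠ 16, u ≠ 4, v ≠ 4 be reals, let z ∈ ℝ, and let P ≥ 1 be an integer. Then V(P,z) = (20·c²·L³/(3·E·I·a))·(1 − (a/16)^P)/((16/a) − 1) − (c²·L³/(E·I))·Σ_{i=1}^P (a/16)^{i−1} σ(2^{i−1} z) + (2·s²·L/(E·A·u))·(1 − (u/4)^P)/((4/u) − 1) + (2·c²·L/(G·A*·v))·(1 − (v/4)^P)/((4/v) − 1). -/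
/-- Vertical displacement per unit load of the end node located at `z` in a binary tree
structure with `P` levels, from the Principle of Virtual Work (bending + axial + shear). -/
noncomputable def Vdisp (c s L E I A A' G a u v z : ℝ) (P : ℕ) : ℝ :=
  (∑ i ∈ Finset.Icc 1 P, (a ^ (i - 1) / (E * I)) *
      ∫ x in (0:ℝ)..(L * 2 ^ ((1:ℤ) - (i:ℤ))),
        (4 * c * L * (2 ^ (-(i:ℤ)) - distNearInt (2 ^ (i - 1) * z) / 2 ^ (i - 1)) - c * x) *
          (c * 2 ^ (-(i:ℤ)) * (L * 2 ^ ((1:ℤ) - (i:ℤ)) - x))) +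
  (∑ i ∈ Finset.Icc 1 P,
      s ^ 2 * 2 ^ (-(i:ℤ)) * L * 2 ^ ((1:ℤ) - (i:ℤ)) * u ^ (i - 1) / (E * A)) +
  (∑ i ∈ Finset.Icc 1 P,
      c ^ 2 * 2 ^ (-(i:ℤ)) * L * 2 ^ ((1:ℤ) - (i:ℤ)) * v ^ (i - 1) / (G * A'))

lemma int_eval (Q c c2 K : ℝ) :
    (∫ x in (0:ℝ)..K, (Q - c*x)*(c2*(K-x))) = c2*(Q*K^2/2 - c*K^3/6) := by
  have h : ∀ x : ℝ, (Q - c*x)*(c2*(K-x))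
      = c2*Q*K + (-(c2*Q) - c2*c*K)*x + (c2*c)*x^2 := by intro x; ring
  simp_rw [h]
  rw [intervalIntegral.integral_add (Continuous.intervalIntegrable (by continuity) _ _)
        (Continuous.intervalIntegrable (by continuity) _ _),
      intervalIntegral.integral_add (Continuous.intervalIntegrable (by continuity) _ _)
        (Continuous.intervalIntegrable (by continuity) _ _),
      intervalIntegral.integral_const, intervalIntegral.integral_const_mul,
      intervalIntegral.integral_const_mul, integral_id, integral_pow]
  push_cast [smul_eq_mul]
  ring

lemma gsum (r : ℝ) (hr : r ≠ 1) (P : ℕ) :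
    (∑ i ∈ Finset.Icc 1 P, r ^ (i - 1)) = (1 - r ^ P) / (1 - r) := by
  have h1 : (1:ℝ) - r ≠ 0 := fun h => hr (by linarith [sub_eq_zero.mp h])
  rw [← Finset.Ico_add_one_right_eq_Icc, Finset.sum_Ico_eq_sum_range]
  simp only [Nat.add_sub_cancel, Nat.add_sub_cancel_left, Nat.succ_sub_one]
  rw [geom_sum_eq hr, div_eq_div_iff (fun h => hr (by linarith [sub_eq_zero.mp h])) h1]
  ring


set_option maxHeartbeats 1000000 in
/-- Closed form of the vertical displacement of the end node at `z` for a finite structure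
with `P` levels, when `a ≠ 16`, `u ≠ 4`, `v ≠ 4`. -/
theorem vertical_displacement_finite (c s L E I A A' G a u v : ℝ)
    (hc : 0 < c) (hs : 0 < s) (hL : 0 < L) (hE : 0 < E) (hI : 0 < I)
    (hA : 0 < A) (hA' : 0 < A') (hG : 0 < G)
    (ha : 0 < a) (hu : 0 < u) (hv : 0 < v)
    (ha16 : a ≠ 16) (hu4 : u ≠ 4) (hv4 : v ≠ 4) (z : ℝ) (P : ℕ) (hP : 1 ≤ P) :
    Vdisp c s L E I A A' G a u v z P =
      (20 * c ^ 2 * L ^ 3 / (3 * E * I * a)) * ((1 - (a / 16) ^ P) / (16 / a - 1)) -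
        (c ^ 2 * L ^ 3 / (E * I)) *
          (∑ i ∈ Finset.Icc 1 P, (a / 16) ^ (i - 1) * distNearInt (2 ^ (i - 1) * z)) +
      (2 * s ^ 2 * L / (E * A * u)) * ((1 - (u / 4) ^ P) / (4 / u - 1)) +
      (2 * c ^ 2 * L / (G * A' * v)) * ((1 - (v / 4) ^ P) / (4 / v - 1)) := by
  have hE' := hE.ne'
  have hI' := hI.ne'
  have hA0 := hA.ne'
  have hA'0 := hA'.ne'
  have hG' := hG.ne'
  rw [Vdisp]
  have hbend : ∀ i ∈ Finset.Icc 1 P,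
      (a ^ (i - 1) / (E * I)) * (∫ x in (0:ℝ)..(L * 2 ^ ((1:ℤ) - (i:ℤ))),
        (4 * c * L * (2 ^ (-(i:ℤ)) - distNearInt (2 ^ (i - 1) * z) / 2 ^ (i - 1)) - c * x) *
          (c * 2 ^ (-(i:ℤ)) * (L * 2 ^ ((1:ℤ) - (i:ℤ)) - x)))
      = (5/12) * (c^2*L^3/(E*I)) * (a/16)^(i-1)
        - (c^2*L^3/(E*I)) * ((a/16)^(i-1) * distNearInt (2 ^ (i - 1) * z)) := by
    intro i hi
    obtain ⟨hi1, -⟩ := Finset.mem_Icc.mp hi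
    rw [int_eval]
    set d := distNearInt (2 ^ (i - 1) * z) with hd
    have ht : ((2:ℝ)^(i-1)) ≠ 0 := by positivity
    have hpi : (2:ℝ)^i = 2^(i-1) * 2 := by
      rw [← pow_succ]; congr 1; omega
    have e1 : (2:ℝ)^(-(i:ℤ)) = ((2:ℝ)^(i-1) * 2)⁻¹ := by
      rw [zpow_neg, zpow_natCast, hpi]
    have e2 : (2:ℝ)^((1:ℤ)-(i:ℤ)) = 2 / ((2:ℝ)^(i-1) * 2) := by
      rw [zpow_sub₀ two_ne_zero, zpow_one, zpow_natCast, hpi]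
    have e3 : (a/16:ℝ)^(i-1) = a^(i-1) / ((2:ℝ)^(i-1))^4 := by
      rw [div_pow]
      congr 1
      rw [show (16:ℝ) = 2^4 by norm_num, ← pow_mul, ← pow_mul, Nat.mul_comm]
    rw [e1, e2, e3]
    field_simp
    ring
  have haxial : ∀ i ∈ Finset.Icc 1 P,
      s ^ 2 * 2 ^ (-(i:ℤ)) * L * 2 ^ ((1:ℤ) - (i:ℤ)) * u ^ (i - 1) / (E * A)
      = (s^2*L/(2*E*A)) * (u/4)^(i-1) := by
    intro i hi
    obtain ⟨hi1, -⟩ := Finset.mem_Icc.mp hi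
    have ht : ((2:ℝ)^(i-1)) ≠ 0 := by positivity
    have hpi : (2:ℝ)^i = 2^(i-1) * 2 := by
      rw [← pow_succ]; congr 1; omega
    have e1 : (2:ℝ)^(-(i:ℤ)) = ((2:ℝ)^(i-1) * 2)⁻¹ := by
      rw [zpow_neg, zpow_natCast, hpi]
    have e2 : (2:ℝ)^((1:ℤ)-(i:ℤ)) = 2 / ((2:ℝ)^(i-1) * 2) := by
      rw [zpow_sub₀ two_ne_zero, zpow_one, zpow_natCast, hpi]
    have e3 : (u/4:ℝ)^(i-1) = u^(i-1) / ((2:ℝ)^(i-1))^2 := by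
      rw [div_pow]
      congr 1
      rw [show (4:ℝ) = 2^2 by norm_num, ← pow_mul, ← pow_mul, Nat.mul_comm]
    rw [e1, e2, e3]
    field_simp
  have hshear : ∀ i ∈ Finset.Icc 1 P,
      c ^ 2 * 2 ^ (-(i:ℤ)) * L * 2 ^ ((1:ℤ) - (i:ℤ)) * v ^ (i - 1) / (G * A')
      = (c^2*L/(2*G*A')) * (v/4)^(i-1) := by
    intro i hi
    obtain ⟨hi1, -⟩ := Finset.mem_Icc.mp hi
    have ht : ((2:ℝ)^(i-1)) ≠ 0 := by positivity
    have hpi : (2:ℝ)^i = 2^(i-1) * 2 := by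
      rw [← pow_succ]; congr 1; omega
    have e1 : (2:ℝ)^(-(i:ℤ)) = ((2:ℝ)^(i-1) * 2)⁻¹ := by
      rw [zpow_neg, zpow_natCast, hpi]
    have e2 : (2:ℝ)^((1:ℤ)-(i:ℤ)) = 2 / ((2:ℝ)^(i-1) * 2) := by
      rw [zpow_sub₀ two_ne_zero, zpow_one, zpow_natCast, hpi]
    have e3 : (v/4:ℝ)^(i-1) = v^(i-1) / ((2:ℝ)^(i-1))^2 := by
      rw [div_pow]
      congr 1
      rw [show (4:ℝ) = 2^2 by norm_num, ← pow_mul, ← pow_mul, Nat.mul_comm]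
    rw [e1, e2, e3]
    field_simp
  rw [Finset.sum_congr rfl hbend, Finset.sum_congr rfl haxial, Finset.sum_congr rfl hshear,
      Finset.sum_sub_distrib, ← Finset.mul_sum, ← Finset.mul_sum, ← Finset.mul_sum,
      ← Finset.mul_sum]
  have hra : (a:ℝ)/16 ≠ 1 := fun h => ha16 (by linarith [(div_eq_one_iff_eq (by norm_num : (16:ℝ) ≠ 0)).mp h])
  have hru : (u:ℝ)/4 ≠ 1 := fun h => hu4 (by linarith [(div_eq_one_iff_eq (by norm_num : (4:ℝ) ≠ 0)).mp h])
  have hrv : (v:ℝ)/4 ≠ 1 := fun h => hv4 (by linarith [(div_eq_one_iff_eq (by norm_num : (4:ℝ) ≠ 0)).mp h])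
  rw [gsum _ hra, gsum _ hru, gsum _ hrv]
  have h16a : (16:ℝ) - a ≠ 0 := sub_ne_zero.mpr (Ne.symm ha16)
  have h4u : (4:ℝ) - u ≠ 0 := sub_ne_zero.mpr (Ne.symm hu4)
  have h4v : (4:ℝ) - v ≠ 0 := sub_ne_zero.mpr (Ne.symm hv4)
  have r1 : (1:ℝ) - a/16 = (16 - a)/16 := by ring
  have r2 : (1:ℝ) - u/4 = (4 - u)/4 := by ring
  have r3 : (1:ℝ) - v/4 = (4 - v)/4 := by ring
  have r4 : (16:ℝ)/a - 1 = (16 - a)/a := by field_simp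
  have r5 : (4:ℝ)/u - 1 = (4 - u)/u := by field_simp
  have r6 : (4:ℝ)/v - 1 = (4 - v)/v := by field_simp
  rw [r1, r2, r3, r4, r5, r6]
  field_simp
  ring
end

section
/- Let c, s, L, E, I, A, A*, G > 0 be reals, let a be a real with 1 < a < 16, let u, v > 0 be reals with u ≥ 4 or v ≥ 4, and let z ∈ ℝ. Then V(P,z) → +∞ as P → ∞; that is, the vertical displacements of the end nodes diverge and the structure collapses. -/
open Filter

lemma distNearInt_nonneg (x : ℝ) : 0 ≤ distNearInt x :=
  le_ciInf fun _ => abs_nonneg _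

lemma distNearInt_le_half (x : ℝ) : distNearInt x ≤ 1/2 := by
  have hb : BddBelow (Set.range fun k : ℤ => |x - k|) :=
    ⟨0, by rintro y ⟨k, rfl⟩; exact abs_nonneg _⟩
  calc distNearInt x ≤ |x - round x| := ciInf_le hb (round x)
    _ ≤ 1/2 := by simpa using abs_sub_round x

lemma zpow_sub_cast (j : ℕ) : (2:ℝ) ^ ((1:ℤ) - ((1+j:ℕ):ℤ)) = 2 * ((2:ℝ)^(j+1))⁻¹ := by
  have h : ((1:ℤ) - ((1+j:ℕ):ℤ)) = -(j:ℤ) := by push_cast; ring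
  rw [h, zpow_neg, zpow_natCast, pow_succ, mul_inv]
  have : ((2:ℝ)^j) ≠ 0 := by positivity
  field_simp

lemma zpow_neg_cast (j : ℕ) : (2:ℝ) ^ (-((1+j:ℕ):ℤ)) = ((2:ℝ)^(j+1))⁻¹ := by
  have h : (-((1+j:ℕ):ℤ)) = -((j+1:ℕ):ℤ) := by push_cast; ring
  rw [h, zpow_neg, zpow_natCast]

lemma bending_term_ge (c L E I a z : ℝ) (hc : 0 < c) (hL : 0 < L) (hE : 0 < E)
    (hI : 0 < I) (ha : 0 ≤ a) (i : ℕ) (hi : 1 ≤ i) :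
    -(c^2*L^3/(2*E*I)) * (a/16)^(i-1) ≤
    (a ^ (i - 1) / (E * I)) *
      ∫ x in (0:ℝ)..(L * 2 ^ ((1:ℤ) - (i:ℤ))),
        (4 * c * L * (2 ^ (-(i:ℤ)) - distNearInt (2 ^ (i - 1) * z) / 2 ^ (i - 1)) - c * x) *
          (c * 2 ^ (-(i:ℤ)) * (L * 2 ^ ((1:ℤ) - (i:ℤ)) - x)) := by
  obtain ⟨j, rfl⟩ := Nat.exists_eq_add_of_le hi
  simp only [Nat.add_sub_cancel_left, zpow_sub_cast, zpow_neg_cast]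
  set p : ℝ := (2:ℝ)^(j+1) with hp
  have hppos : 0 < p := by positivity
  set ℓ : ℝ := L * (2 * p⁻¹) with hℓ
  have hℓpos : 0 < ℓ := by positivity
  set d : ℝ := distNearInt (2 ^ j * z) with hd
  have hd0 : 0 ≤ d := distNearInt_nonneg _
  have hdh : d ≤ 1/2 := distNearInt_le_half _
  set Q : ℝ := 4 * c * L * (p⁻¹ - d / 2 ^ j) with hQdef
  have hpj : (0:ℝ) < 2 ^ j := by positivity
  have hpinv : p⁻¹ = (1/2) / 2^j := by
    rw [hp, pow_succ]; field_simp
  have hQ0 : 0 ≤ Q := by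
    have h1 : d / 2^j ≤ (1/2) / 2^j := by gcongr
    have h2 : d / 2^j ≤ p⁻¹ := by rw [hpinv]; exact h1
    have : 0 ≤ p⁻¹ - d / 2^j := by linarith
    exact mul_nonneg (by positivity) this
  set m : ℝ := -(c*ℓ)*(c*p⁻¹*ℓ) with hm
  have hpt : ∀ x ∈ Set.Icc (0:ℝ) ℓ, m ≤ (Q - c*x) * (c * p⁻¹ * (ℓ - x)) := by
    intro x hx
    obtain ⟨hx0, hxℓ⟩ := hx
    have h1 : 0 ≤ Q - c*x + c*ℓ := by nlinarith
    have h2 : 0 ≤ c * p⁻¹ * (ℓ - x) := by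
      have hsub : 0 ≤ ℓ - x := by linarith
      exact mul_nonneg (mul_nonneg hc.le (inv_nonneg.mpr hppos.le)) hsub
    have h3 : 0 ≤ c*ℓ := by positivity
    have h4 : 0 ≤ c * p⁻¹ * x := by positivity
    nlinarith [mul_nonneg h1 h2, mul_nonneg h3 h4, hm]
  have hcont : Continuous fun x : ℝ => (Q - c*x) * (c * p⁻¹ * (ℓ - x)) := by fun_prop
  have hmono := intervalIntegral.integral_mono_on (le_of_lt hℓpos)
    ((intervalIntegrable_const : IntervalIntegrable (fun _ => m) MeasureTheory.volume 0 ℓ)) (hcont.intervalIntegrable 0 ℓ) hpt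
  rw [intervalIntegral.integral_const] at hmono
  simp only [sub_zero, smul_eq_mul] at hmono
  have hnn : (0:ℝ) ≤ a ^ j / (E * I) := by positivity
  have hfinal := mul_le_mul_of_nonneg_left hmono hnn
  have heq : (a ^ j / (E*I)) * (ℓ * m) = -(c^2*L^3/(2*E*I)) * (a/16)^j := by
    rw [hm, hℓ]
    have hpne : p ≠ 0 := ne_of_gt hppos
    have h16 : ((16:ℝ))^j = 2^(j*4) := by
      rw [show (16:ℝ)=2^4 by norm_num, ← pow_mul, Nat.mul_comm]
    rw [hp]
    field_simp [div_pow]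
    rw [div_pow, h16]; field_simp; ring
  calc -(c^2*L^3/(2*E*I)) * (a/16)^j = (a ^ j / (E*I)) * (ℓ * m) := heq.symm
    _ ≤ _ := hfinal

lemma axial_term_eq (s L E A u : ℝ) (hE : 0 < E) (hA : 0 < A) (i : ℕ) (hi : 1 ≤ i) :
    s ^ 2 * 2 ^ (-(i:ℤ)) * L * 2 ^ ((1:ℤ) - (i:ℤ)) * u ^ (i - 1) / (E * A)
      = (s^2 * L/(2*(E*A))) * (u/4)^(i-1) := by
  obtain ⟨j, rfl⟩ := Nat.exists_eq_add_of_le hi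
  simp only [Nat.add_sub_cancel_left, zpow_sub_cast, zpow_neg_cast]
  have hpne : ((2:ℝ)^(j+1)) ≠ 0 := by positivity
  have h4 : ((4:ℝ))^j = 2^(j*2) := by
    rw [show (4:ℝ)=2^2 by norm_num, ← pow_mul, Nat.mul_comm]
  field_simp [div_pow]
  rw [div_pow, h4]; field_simp; ring

lemma geom_bound (r : ℝ) (hr0 : 0 ≤ r) (hr1 : r < 1) (P : ℕ) :
    ∑ i ∈ Finset.range P, r^i ≤ 1/(1-r) := by
  have h1r : 0 < 1 - r := by linarith
  rw [geom_sum_eq (ne_of_lt hr1)]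
  have key : (r^P - 1)/(r-1) = (1-r^P)/(1-r) := by
    rw [div_eq_div_iff (by linarith) (ne_of_gt h1r)]; ring
  rw [key]
  have hP : 0 ≤ r^P := pow_nonneg hr0 P
  gcongr
  linarith

lemma sum_axial_ge (s L E A u : ℝ) (hs : 0 < s) (hL : 0 < L) (hE : 0 < E)
    (hA : 0 < A) (hu4 : 4 ≤ u) (P : ℕ) :
    (P:ℝ) * (s^2*L/(2*(E*A))) ≤
      ∑ i ∈ Finset.Icc 1 P, s ^ 2 * 2 ^ (-(i:ℤ)) * L * 2 ^ ((1:ℤ) - (i:ℤ)) * u ^ (i - 1) / (E * A) := by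
  have hone : ∀ i ∈ Finset.Icc 1 P,
      (s^2*L/(2*(E*A))) ≤ s ^ 2 * 2 ^ (-(i:ℤ)) * L * 2 ^ ((1:ℤ) - (i:ℤ)) * u ^ (i - 1) / (E * A) := by
    intro i hi
    rw [axial_term_eq s L E A u hE hA i (Finset.mem_Icc.mp hi).1]
    have h14 : (1:ℝ) ≤ u/4 := (le_div_iff₀ (by norm_num)).mpr (by linarith)
    have hpow : (1:ℝ) ≤ (u/4)^(i-1) := by
      calc (1:ℝ) = 1^(i-1) := (one_pow _).symm
        _ ≤ (u/4)^(i-1) := pow_le_pow_left₀ zero_le_one h14 _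
    exact le_mul_of_one_le_right (by positivity) hpow
  have := Finset.card_nsmul_le_sum (Finset.Icc 1 P) _ _ hone
  simpa [Nat.card_Icc, nsmul_eq_mul] using this

/-- For `1 < a < 16` and `u ≥ 4` or `v ≥ 4`, the vertical displacements of the end nodes
diverge to `+∞` as the number of levels tends to infinity: the structure collapses. -/
theorem vertical_displacement_collapse (c s L E I A A' G a u v : ℝ)
    (hc : 0 < c) (hs : 0 < s) (hL : 0 < L) (hE : 0 < E) (hI : 0 < I)
    (hA : 0 < A) (hA' : 0 < A') (hG : 0 < G)
    (ha1 : 1 < a) (ha16 : a < 16) (hu : 0 < u) (hv : 0 < v)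
    (huv : 4 ≤ u ∨ 4 ≤ v) (z : ℝ) :
    Tendsto (fun P : ℕ => Vdisp c s L E I A A' G a u v z P) atTop atTop := by
  have ha0 : (0:ℝ) ≤ a := by linarith
  have hr1 : a/16 < 1 := (div_lt_one (by norm_num)).mpr ha16
  have hr0 : (0:ℝ) ≤ a/16 := by positivity
  have h1r : (0:ℝ) < 1 - a/16 := by linarith
  -- bending sum lower bound
  have hS1 : ∀ P : ℕ, -((c^2*L^3/(2*E*I)) * (1/(1 - a/16))) ≤
      ∑ i ∈ Finset.Icc 1 P, (a ^ (i - 1) / (E * I)) *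
        ∫ x in (0:ℝ)..(L * 2 ^ ((1:ℤ) - (i:ℤ))),
          (4 * c * L * (2 ^ (-(i:ℤ)) - distNearInt (2 ^ (i - 1) * z) / 2 ^ (i - 1)) - c * x) *
            (c * 2 ^ (-(i:ℤ)) * (L * 2 ^ ((1:ℤ) - (i:ℤ)) - x)) := by
    intro P
    have hsum := Finset.sum_le_sum fun (i:ℕ) (hi : i ∈ Finset.Icc 1 P) =>
      bending_term_ge c L E I a z hc hL hE hI ha0 i (Finset.mem_Icc.mp hi).1
    have hre : ∑ i ∈ Finset.Icc 1 P, -(c^2*L^3/(2*E*I)) * (a/16)^(i-1)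
        = -((c^2*L^3/(2*E*I)) * ∑ i ∈ Finset.range P, (a/16)^i) := by
      rw [← Finset.Ico_add_one_right_eq_Icc, Finset.sum_Ico_eq_sum_range]
      simp [Finset.mul_sum, neg_mul]
    have hgeo : ∑ i ∈ Finset.range P, (a/16)^i ≤ 1/(1-a/16) := geom_bound _ hr0 hr1 P
    calc -((c^2*L^3/(2*E*I)) * (1/(1-a/16)))
        ≤ -((c^2*L^3/(2*E*I)) * ∑ i ∈ Finset.range P, (a/16)^i) := by
          apply neg_le_neg; exact mul_le_mul_of_nonneg_left hgeo (by positivity)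
      _ = ∑ i ∈ Finset.Icc 1 P, -(c^2*L^3/(2*E*I)) * (a/16)^(i-1) := hre.symm
      _ ≤ _ := hsum
  -- axial + shear sums lower bound
  obtain ⟨δ, hδpos, hδ⟩ : ∃ δ : ℝ, 0 < δ ∧ ∀ P : ℕ, (P:ℝ) * δ ≤
      (∑ i ∈ Finset.Icc 1 P,
        s ^ 2 * 2 ^ (-(i:ℤ)) * L * 2 ^ ((1:ℤ) - (i:ℤ)) * u ^ (i - 1) / (E * A)) +
      (∑ i ∈ Finset.Icc 1 P,
        c ^ 2 * 2 ^ (-(i:ℤ)) * L * 2 ^ ((1:ℤ) - (i:ℤ)) * v ^ (i - 1) / (G * A')) := by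
    rcases huv with h4 | h4
    · refine ⟨s^2*L/(2*(E*A)), by positivity, fun P => ?_⟩
      have h2 := sum_axial_ge s L E A u hs hL hE hA h4 P
      have h3 : (0:ℝ) ≤ ∑ i ∈ Finset.Icc 1 P,
          c ^ 2 * 2 ^ (-(i:ℤ)) * L * 2 ^ ((1:ℤ) - (i:ℤ)) * v ^ (i - 1) / (G * A') :=
        Finset.sum_nonneg fun i _ => by positivity
      linarith
    · refine ⟨c^2*L/(2*(G*A')), by positivity, fun P => ?_⟩
      have h2 := sum_axial_ge c L G A' v hc hL hG hA' h4 P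
      have h3 : (0:ℝ) ≤ ∑ i ∈ Finset.Icc 1 P,
          s ^ 2 * 2 ^ (-(i:ℤ)) * L * 2 ^ ((1:ℤ) - (i:ℤ)) * u ^ (i - 1) / (E * A) :=
        Finset.sum_nonneg fun i _ => by positivity
      linarith
  have key : ∀ P : ℕ, (P:ℝ) * δ - ((c^2*L^3/(2*E*I)) * (1/(1 - a/16))) ≤
      Vdisp c s L E I A A' G a u v z P := by
    intro P
    unfold Vdisp
    linarith [hS1 P, hδ P]
  apply tendsto_atTop_mono key
  have h1 : Tendsto (fun P : ℕ => (P:ℝ)) atTop atTop := tendsto_natCast_atTop_atTop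
  have h2 := h1.atTop_mul_const hδpos
  have h3 := tendsto_atTop_add_const_right atTop
    (-((c^2*L^3/(2*E*I)) * (1/(1 - a/16)))) h2
  simpa [sub_eq_add_neg] using h3
end
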